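/- Let T be a bounded linear operator between Hilbert spaces X and Y and let α > 0. Then the operator norm of (T*T + αI)^{-1} T* is at most 1/(2√α). -/

import Mathlib

open ContinuousLinearMap in
/-- For a bounded linear operator `T : X → Y` between Hilbert spaces and `α > 0`,
`‖(T*T + αI)⁻¹ T*‖ ≤ 1/(2√α)`.  The inverse is encoded by an operator `B` which is a
two-sided inverse of `T*T + αI`. -/
theorem norm_tikhonov_inv_comp_adjoint_le
    {X Y : Type*} [NormedAddCommGroup X] [InnerProductSpace ℝ X] [CompleteSpace X]
    [NormedAddCommGroup Y] [InnerProductSpace ℝ Y] [CompleteSpace Y]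
    (T : X →L[ℝ] Y) (α : ℝ) (hα : 0 < α) (B : X →L[ℝ] X)
    (hB₁ : B * (adjoint T ∘L T + α • 1) = 1)
    (hB₂ : (adjoint T ∘L T + α • 1) * B = 1) :
    ‖B ∘L adjoint T‖ ≤ 1 / (2 * Real.sqrt α) := by
  have hs : 0 < Real.sqrt α := Real.sqrt_pos.mpr hα
  apply ContinuousLinearMap.opNorm_le_bound _ (by positivity)
  intro y
  set x := B (adjoint T y) with hx
  have hAx : adjoint T (T x) + α • x = adjoint T y := by
    have h := congrArg (fun f => f (adjoint T y)) hB₂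
    simpa [ContinuousLinearMap.mul_apply, ContinuousLinearMap.add_apply,
      ContinuousLinearMap.comp_apply, ContinuousLinearMap.smul_apply] using h
  have key : ‖T x‖ ^ 2 + α * ‖x‖ ^ 2 = (inner ℝ y (T x) : ℝ) := by
    have h1 : (inner ℝ (adjoint T (T x) + α • x) x : ℝ) = inner ℝ (adjoint T y) x := by
      rw [hAx]
    rw [inner_add_left, real_inner_smul_left, adjoint_inner_left, adjoint_inner_left,
      real_inner_self_eq_norm_sq] at h1
    rw [← h1, real_inner_self_eq_norm_sq]
  have hle : ‖T x‖ ^ 2 + α * ‖x‖ ^ 2 ≤ ‖y‖ * ‖T x‖ := by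
    rw [key]; exact real_inner_le_norm y (T x)
  have amgm : 2 * Real.sqrt α * (‖x‖ * ‖T x‖) ≤ ‖T x‖ ^ 2 + α * ‖x‖ ^ 2 := by
    nlinarith [sq_nonneg (‖T x‖ - Real.sqrt α * ‖x‖), Real.sq_sqrt hα.le]
  show ‖x‖ ≤ 1 / (2 * Real.sqrt α) * ‖y‖
  rcases eq_or_lt_of_le (norm_nonneg (T x)) with hT | hT
  · have h0 : α * ‖x‖ ^ 2 ≤ 0 := by rw [← hT] at hle; simpa using hle
    have h1 : ‖x‖ ^ 2 = 0 := le_antisymm (by nlinarith) (sq_nonneg _)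
    have hx0 : ‖x‖ = 0 := pow_eq_zero_iff (by norm_num) |>.mp h1
    rw [hx0]; positivity
  · have h2 : 2 * Real.sqrt α * ‖x‖ ≤ ‖y‖ := by nlinarith
    rw [div_mul_eq_mul_div, one_mul, le_div_iff₀ (by positivity)]
    linarith
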